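/- For every δ with 0 < δ < 1/2, the minimal variation of s(x) = sin(2πx) over intervals of length δ satisfies Var_s(δ) := min over t of (max of s on [t,t+δ] minus min of s on [t,t+δ]) ≥ π·δ². -/

import Mathlib

set_option maxHeartbeats 1600000 in
/-- For `0 < δ < 1/2`, the minimal variation of `s(x) = sin(2πx)` over intervals of length `δ`
is at least `πδ²`: on every interval `[t, t+δ]` the oscillation of `s` is at least `πδ²`. -/
theorem stmt13 (δ : ℝ) (h0 : 0 < δ) (h1 : δ < 1/2) (t : ℝ) :
    Real.pi * δ ^ 2 ≤
      sSup ((fun x => Real.sin (2 * Real.pi * x)) '' Set.Icc t (t + δ)) -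
        sInf ((fun x => Real.sin (2 * Real.pi * x)) '' Set.Icc t (t + δ)) := by
  have hπ := Real.pi_pos
  have hπ4 := Real.pi_lt_d2
  have hπ3 := Real.pi_gt_d6
  set f : ℝ → ℝ := fun x => Real.sin (2 * Real.pi * x) with hf
  clear_value f
  have hcont : ContinuousOn f (Set.Icc t (t + δ)) := by
    apply Continuous.continuousOn; continuity
  have hcomp : IsCompact (f '' Set.Icc t (t + δ)) :=
    isCompact_Icc.image_of_continuousOn hcont
  have hbddA : BddAbove (f '' Set.Icc t (t + δ)) := hcomp.bddAbove
  have hbddB : BddBelow (f '' Set.Icc t (t + δ)) := hcomp.bddBelow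
  -- choose the midpoint m
  set c : ℝ := t + δ/4 with hc
  clear_value c
  set lo : ℝ := c - 1/4 + δ/4 with hlo
  clear_value lo
  set k : ℤ := ⌈2 * lo⌉ with hk
  clear_value k
  have hk1 : lo ≤ (k : ℝ)/2 := by
    have := Int.le_ceil (2 * lo); rw [← hk] at this; linarith
  have hk2 : (k : ℝ)/2 ≤ lo + 1/2 := by
    have := Int.ceil_lt_add_one (2 * lo); rw [← hk] at this; linarith
  set m : ℝ := max c (min (c + δ/2) ((k : ℝ)/2)) with hm
  clear_value m
  have hm1 : c ≤ m := by rw [hm]; exact le_max_left _ _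
  have hm2 : m ≤ c + δ/2 := by
    rw [hm]; exact max_le (by linarith) (min_le_left _ _)
  have hmd : |m - (k : ℝ)/2| ≤ 1/4 - δ/4 := by
    rw [abs_le]
    rcases le_total ((k : ℝ)/2) c with h | h
    · have hmin : min (c + δ/2) ((k : ℝ)/2) = (k : ℝ)/2 := min_eq_right (by linarith)
      have : m = c := by rw [hm, hmin, max_eq_left h]
      constructor <;> simp [this] <;> linarith
    · rcases le_total ((k : ℝ)/2) (c + δ/2) with h' | h'
      · have hmin : min (c + δ/2) ((k : ℝ)/2) = (k : ℝ)/2 := min_eq_right h'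
        have : m = (k : ℝ)/2 := by rw [hm, hmin, max_eq_right h]
        constructor <;> simp [this] <;> linarith
      · have hmin : min (c + δ/2) ((k : ℝ)/2) = c + δ/2 := min_eq_left h'
        have : m = c + δ/2 := by rw [hm, hmin, max_eq_right (by linarith)]
        constructor <;> simp [this] <;> linarith
  set a : ℝ := m - δ/4 with ha
  clear_value a
  set b : ℝ := m + δ/4 with hb
  clear_value b
  have haI : a ∈ Set.Icc t (t + δ) := ⟨by rw [ha]; rw [hc] at hm1; linarith,
    by rw [ha]; rw [hc] at hm2; linarith⟩
  have hbI : b ∈ Set.Icc t (t + δ) := ⟨by rw [hb]; rw [hc] at hm1; linarith,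
    by rw [hb]; rw [hc] at hm2; linarith⟩
  -- the key trigonometric identity
  have hdiff : f b - f a = 2 * Real.sin (Real.pi * δ / 2) * Real.cos (2 * Real.pi * m) := by
    rw [hf]
    simp only
    rw [Real.sin_sub_sin]
    have e1 : (2 * Real.pi * b - 2 * Real.pi * a) / 2 = Real.pi * δ / 2 := by
      rw [hb, ha]; ring
    have e2 : (2 * Real.pi * b + 2 * Real.pi * a) / 2 = 2 * Real.pi * m := by
      rw [hb, ha]; ring
    rw [e1, e2]
  -- bound |cos(2πm)| from below
  set u : ℝ := m - (k : ℝ)/2 with hu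
  clear_value u
  have hcosm : Real.cos (2 * Real.pi * m) = (-1 : ℝ)^k * Real.cos (2 * Real.pi * u) := by
    have : 2 * Real.pi * m = 2 * Real.pi * u + (k : ℝ) * Real.pi := by rw [hu]; ring
    rw [this, Real.cos_add_int_mul_pi]
  have habs : |2 * Real.pi * u| ≤ Real.pi/2 - Real.pi * δ / 2 := by
    rw [abs_mul, abs_of_nonneg (by positivity : (0:ℝ) ≤ 2 * Real.pi)]
    have : |u| ≤ 1/4 - δ/4 := hmd
    nlinarith [abs_nonneg u]
  have hcosu : Real.sin (Real.pi * δ / 2) ≤ Real.cos (2 * Real.pi * u) := by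
    rw [← Real.cos_pi_div_two_sub]
    rw [← Real.cos_abs (2 * Real.pi * u)]
    apply Real.cos_le_cos_of_nonneg_of_le_pi (abs_nonneg _) (by nlinarith) habs
  have hs : 0 < Real.sin (Real.pi * δ / 2) := by
    apply Real.sin_pos_of_pos_of_lt_pi (by positivity)
    nlinarith
  -- oscillation is at least 2 sin²(πδ/2)
  set s : ℝ := Real.sin (Real.pi * δ / 2) with hsdef
  clear_value s
  have hosc : 2 * s * s ≤ sSup (f '' Set.Icc t (t + δ)) - sInf (f '' Set.Icc t (t + δ)) := by
    have hfa_le : f a ≤ sSup (f '' Set.Icc t (t + δ)) := le_csSup hbddA ⟨a, haI, rfl⟩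
    have hfb_le : f b ≤ sSup (f '' Set.Icc t (t + δ)) := le_csSup hbddA ⟨b, hbI, rfl⟩
    have hle_fa : sInf (f '' Set.Icc t (t + δ)) ≤ f a := csInf_le hbddB ⟨a, haI, rfl⟩
    have hle_fb : sInf (f '' Set.Icc t (t + δ)) ≤ f b := csInf_le hbddB ⟨b, hbI, rfl⟩
    rcases Int.even_or_odd k with he | ho
    · have hpow : (-1 : ℝ)^k = 1 := he.neg_one_zpow
      rw [hpow, one_mul] at hcosm
      have h2 : 2 * s * s ≤ f b - f a := by
        rw [hcosm] at hdiff
        nlinarith [hcosu, hs, hdiff]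
      linarith
    · have hpow : (-1 : ℝ)^k = -1 := ho.neg_one_zpow
      rw [hpow] at hcosm
      have h2 : 2 * s * s ≤ f a - f b := by
        rw [hcosm] at hdiff
        nlinarith [hcosu, hs, hdiff]
      linarith
  refine le_trans ?_ hosc
  -- finally: π δ² ≤ 2 sin²(πδ/2)
  have hx : Real.pi * δ / 2 ≤ 1 := by nlinarith
  have hsin : Real.pi * δ / 2 - (Real.pi * δ / 2) ^ 3 / 4 < Real.sin (Real.pi * δ / 2) := by
    have := Real.sin_gt_sub_cube (by positivity : 0 < Real.pi * δ / 2)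
    have h3 : 0 < (Real.pi * δ / 2) ^ 3 := by positivity
    linarith
  rw [← hsdef] at hsin
  have hxb : Real.pi * δ / 2 < 0.7875 := by nlinarith
  have hx0 : 0 < Real.pi * δ / 2 := by positivity
  set x : ℝ := Real.pi * δ / 2 with hxdef
  clear_value x
  have hq0 : 0 < x - x^3/4 := by nlinarith [mul_pos hx0 hx0, hxb, hx0]
  have hsq : (x - x^3/4)^2 ≤ s^2 := by nlinarith
  have hw : x^2 < 0.62016 := by nlinarith
  have hkey : 2*x^2 ≤ Real.pi * (x - x^3/4)^2 := by
    nlinarith [hw, hπ3, sq_nonneg x, hx0, sq_nonneg (x^2 - 0.62016),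
      mul_nonneg (sq_nonneg x) (sq_nonneg x)]
  have hfin : Real.pi * δ^2 * Real.pi = 4 * x^2 := by rw [hxdef]; ring
  have hfin2 : Real.pi * (Real.pi * δ ^ 2) ≤ Real.pi * (2 * s * s) := by
    nlinarith [hkey, hπ, hfin, mul_le_mul_of_nonneg_left hsq (le_of_lt hπ)]
  exact le_of_mul_le_mul_left hfin2 hπ
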